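/- Light-cone behavior across the interior-exterior boundary: the outgoing-null slope S(ρ) satisfies lim_{ρ→+∞} S(ρ) = 2, and as ρ → r_s⁺: S(ρ) → +∞ if ζ < 2 (i.e. |k̃| < 1), S(ρ) → 8 if ζ = 2 (i.e. |k̃| = 1), and S(ρ) → 0 if ζ > 2 (i.e. |k̃| > 1); as ρ → r_s⁻: S(ρ) → −∞ if ζ < 2, S(ρ) → −8 if ζ = 2, and S(ρ) → 0 if ζ > 2. -/

import Mathlib

open Real Filter Topology

private lemma aux_rpow_pos {p : ℝ} (hp : 0 < p) :
    Tendsto (fun x : ℝ => x ^ p) (𝓝[>] (0:ℝ)) (𝓝 0) := by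
  have h := (Real.continuousAt_rpow_const 0 p (Or.inr hp.le)).tendsto
  rw [Real.zero_rpow hp.ne'] at h
  exact h.mono_left nhdsWithin_le_nhds

private lemma aux_rpow_neg {p : ℝ} (hp : p < 0) :
    Tendsto (fun x : ℝ => x ^ p) (𝓝[>] (0:ℝ)) atTop := by
  have h1 : Tendsto (fun x : ℝ => (x⁻¹) ^ (-p)) (𝓝[>] (0:ℝ)) atTop :=
    (tendsto_rpow_atTop (neg_pos.2 hp)).comp tendsto_inv_nhdsGT_zero
  refine h1.congr' ?_
  filter_upwards [self_mem_nhdsWithin] with x hx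
  rw [Real.inv_rpow (le_of_lt hx), ← Real.rpow_neg (le_of_lt hx), neg_neg]

private lemma aux_core {ζ : ℝ} (hζ0 : 0 < ζ) (A : ℝ → ℝ)
    (hA : Tendsto A (𝓝[>] (0:ℝ)) (𝓝 (2 * ζ ^ 2))) :
    (ζ < 2 → Tendsto (fun x => A x * x ^ (ζ - 2)) (𝓝[>] (0:ℝ)) atTop) ∧
    (ζ = 2 → Tendsto (fun x => A x * x ^ (ζ - 2)) (𝓝[>] (0:ℝ)) (𝓝 (2 * ζ ^ 2))) ∧
    (2 < ζ → Tendsto (fun x => A x * x ^ (ζ - 2)) (𝓝[>] (0:ℝ)) (𝓝 0)) := by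
  refine ⟨fun h => ?_, fun h => ?_, fun h => ?_⟩
  · exact Tendsto.pos_mul_atTop (by positivity) hA (aux_rpow_neg (by linarith))
  · subst h
    simpa [show (2:ℝ) - 2 = 0 by norm_num, Real.rpow_zero] using hA
  · simpa using hA.mul (aux_rpow_pos (by linarith))

theorem lightcone_slope_behavior
    (rs kt : ℝ) (hrs : 0 < rs)
    (ζ : ℝ) (hζ : ζ = Real.sqrt (1 + 3 * kt ^ 2))
    (S : ℝ → ℝ)
    (hS : ∀ ρ : ℝ, 0 < ρ → ρ ≠ rs → S ρ =
      2 * ζ ^ 2 * (rs / ρ) ^ 2 * |1 - rs / ρ| ^ (ζ - 1) /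
        ((1 - rs / ρ) * (1 - Real.sign (1 - rs / ρ) * |1 - rs / ρ| ^ ζ) ^ 2)) :
    Tendsto S atTop (𝓝 2) ∧
      (ζ < 2 → Tendsto S (𝓝[>] rs) atTop) ∧
      (ζ = 2 → Tendsto S (𝓝[>] rs) (𝓝 8)) ∧
      (2 < ζ → Tendsto S (𝓝[>] rs) (𝓝 0)) ∧
      (ζ < 2 → Tendsto S (𝓝[<] rs) atBot) ∧
      (ζ = 2 → Tendsto S (𝓝[<] rs) (𝓝 (-8))) ∧
      (2 < ζ → Tendsto S (𝓝[<] rs) (𝓝 0)) := by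
  have hζ1 : 1 ≤ ζ := by
    have h1 : (1:ℝ) ≤ 1 + 3 * kt ^ 2 := by nlinarith [sq_nonneg kt]
    calc (1:ℝ) = Real.sqrt 1 := by simp
    _ ≤ Real.sqrt (1 + 3 * kt ^ 2) := Real.sqrt_le_sqrt h1
    _ = ζ := hζ.symm
  have hζ0 : 0 < ζ := lt_of_lt_of_le one_pos hζ1
  -- the map x for the right limit
  have hxmap : Tendsto (fun ρ : ℝ => 1 - rs / ρ) (𝓝[>] rs) (𝓝[>] (0:ℝ)) := by
    rw [tendsto_nhdsWithin_iff]
    constructor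
    · have hc : ContinuousAt (fun ρ : ℝ => 1 - rs / ρ) rs :=
        continuousAt_const.sub (continuousAt_const.div continuousAt_id hrs.ne')
      have : Tendsto (fun ρ : ℝ => 1 - rs / ρ) (𝓝[>] rs) (𝓝 (1 - rs / rs)) :=
        hc.tendsto.mono_left nhdsWithin_le_nhds
      simpa [div_self hrs.ne'] using this
    · filter_upwards [self_mem_nhdsWithin] with ρ hρ
      have hρ0 : 0 < ρ := hrs.trans hρ
      have : rs / ρ < 1 := (div_lt_one hρ0).2 hρ
      simpa [Set.mem_Ioi] using by linarith
  -- the map u for the left limit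
  have hposL : ∀ᶠ ρ in 𝓝[<] rs, (0:ℝ) < ρ :=
    (eventually_gt_nhds hrs).filter_mono nhdsWithin_le_nhds
  have humap : Tendsto (fun ρ : ℝ => rs / ρ - 1) (𝓝[<] rs) (𝓝[>] (0:ℝ)) := by
    rw [tendsto_nhdsWithin_iff]
    constructor
    · have hc : ContinuousAt (fun ρ : ℝ => rs / ρ - 1) rs :=
        (continuousAt_const.div continuousAt_id hrs.ne').sub continuousAt_const
      have : Tendsto (fun ρ : ℝ => rs / ρ - 1) (𝓝[<] rs) (𝓝 (rs / rs - 1)) :=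
        hc.tendsto.mono_left nhdsWithin_le_nhds
      simpa [div_self hrs.ne'] using this
    · filter_upwards [hposL, self_mem_nhdsWithin] with ρ hρ0 hρ
      have : 1 < rs / ρ := (one_lt_div hρ0).2 hρ
      simpa [Set.mem_Ioi] using by linarith
  -- the map t for the limit at infinity
  have htmap : Tendsto (fun ρ : ℝ => rs / ρ) atTop (𝓝[>] (0:ℝ)) := by
    rw [tendsto_nhdsWithin_iff]
    constructor
    · exact Tendsto.div_atTop tendsto_const_nhds tendsto_id
    · filter_upwards [eventually_gt_atTop 0] with ρ hρ
      simpa [Set.mem_Ioi] using div_pos hrs hρ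
  -- limits of coefficient functions
  have hApos : Tendsto (fun x : ℝ => 2 * ζ ^ 2 * (1 - x) ^ 2 / (1 - x ^ ζ) ^ 2)
      (𝓝[>] (0:ℝ)) (𝓝 (2 * ζ ^ 2)) := by
    have h1 : ContinuousAt (fun x : ℝ => x ^ ζ) 0 :=
      continuousAt_id.rpow_const (Or.inr hζ0.le)
    have hc : ContinuousAt (fun x : ℝ => 2 * ζ ^ 2 * (1 - x) ^ 2 / (1 - x ^ ζ) ^ 2) 0 :=
      (continuousAt_const.mul ((continuousAt_const.sub continuousAt_id).pow 2)).div
        ((continuousAt_const.sub h1).pow 2) (by simp [Real.zero_rpow hζ0.ne'])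
    have : Tendsto (fun x : ℝ => 2 * ζ ^ 2 * (1 - x) ^ 2 / (1 - x ^ ζ) ^ 2) (𝓝[>] (0:ℝ))
        (𝓝 (2 * ζ ^ 2 * (1 - 0) ^ 2 / (1 - (0:ℝ) ^ ζ) ^ 2)) :=
      hc.tendsto.mono_left nhdsWithin_le_nhds
    simpa [Real.zero_rpow hζ0.ne'] using this
  have hAneg : Tendsto (fun x : ℝ => 2 * ζ ^ 2 * (1 + x) ^ 2 / (1 + x ^ ζ) ^ 2)
      (𝓝[>] (0:ℝ)) (𝓝 (2 * ζ ^ 2)) := by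
    have h1 : ContinuousAt (fun x : ℝ => x ^ ζ) 0 :=
      continuousAt_id.rpow_const (Or.inr hζ0.le)
    have hc : ContinuousAt (fun x : ℝ => 2 * ζ ^ 2 * (1 + x) ^ 2 / (1 + x ^ ζ) ^ 2) 0 :=
      (continuousAt_const.mul ((continuousAt_const.add continuousAt_id).pow 2)).div
        ((continuousAt_const.add h1).pow 2) (by simp [Real.zero_rpow hζ0.ne'])
    have : Tendsto (fun x : ℝ => 2 * ζ ^ 2 * (1 + x) ^ 2 / (1 + x ^ ζ) ^ 2) (𝓝[>] (0:ℝ))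
        (𝓝 (2 * ζ ^ 2 * (1 + 0) ^ 2 / (1 + (0:ℝ) ^ ζ) ^ 2)) :=
      hc.tendsto.mono_left nhdsWithin_le_nhds
    simpa [Real.zero_rpow hζ0.ne'] using this
  obtain ⟨hcP1, hcP2, hcP3⟩ := aux_core hζ0 _ hApos
  obtain ⟨hcN1, hcN2, hcN3⟩ := aux_core hζ0 _ hAneg
  -- eventual equality on the right of rs
  have heqP : S =ᶠ[𝓝[>] rs] fun ρ =>
      (2 * ζ ^ 2 * (1 - (1 - rs / ρ)) ^ 2 / (1 - (1 - rs / ρ) ^ ζ) ^ 2) *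
        (1 - rs / ρ) ^ (ζ - 2) := by
    filter_upwards [self_mem_nhdsWithin] with ρ hρ
    have hρr : rs < ρ := hρ
    have hρ0 : 0 < ρ := hrs.trans hρr
    rw [hS ρ hρ0 (ne_of_gt hρr)]
    set x : ℝ := 1 - rs / ρ with hxdef
    have hx0 : 0 < x := by
      have : rs / ρ < 1 := (div_lt_one hρ0).2 hρr
      simp [hxdef]; linarith
    have hx1 : x < 1 := by
      have : 0 < rs / ρ := div_pos hrs hρ0
      simp [hxdef]; linarith
    have hxζ : x ^ ζ < 1 := Real.rpow_lt_one hx0.le hx1 hζ0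
    have hden : (1 : ℝ) - x ^ ζ ≠ 0 := by linarith
    have hsplit : x ^ (ζ - 1) = x ^ (ζ - 2) * x := by
      rw [show ζ - 1 = (ζ - 2) + 1 by ring, Real.rpow_add hx0, Real.rpow_one]
    rw [abs_of_pos hx0, Real.sign_of_pos hx0, one_mul, hsplit]
    rw [show rs / ρ = 1 - x by rw [hxdef]; ring]
    field_simp
  -- eventual equality on the left of rs
  have heqN : S =ᶠ[𝓝[<] rs] fun ρ =>
      -((2 * ζ ^ 2 * (1 + (rs / ρ - 1)) ^ 2 / (1 + (rs / ρ - 1) ^ ζ) ^ 2) *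
        (rs / ρ - 1) ^ (ζ - 2)) := by
    filter_upwards [hposL, self_mem_nhdsWithin] with ρ hρ0 hρ
    have hρr : ρ < rs := hρ
    rw [hS ρ hρ0 (ne_of_lt hρr)]
    set u : ℝ := rs / ρ - 1 with hudef
    have hu0 : 0 < u := by
      have : 1 < rs / ρ := (one_lt_div hρ0).2 hρr
      simp [hudef]; linarith
    have h1 : 1 - rs / ρ = -u := by rw [hudef]; ring
    have h2 : rs / ρ = 1 + u := by rw [hudef]; ring
    have huζ : (0:ℝ) ≤ u ^ ζ := Real.rpow_nonneg hu0.le ζ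
    have hden : (1 : ℝ) + u ^ ζ ≠ 0 := by positivity
    have hsplit : u ^ (ζ - 1) = u ^ (ζ - 2) * u := by
      rw [show ζ - 1 = (ζ - 2) + 1 by ring, Real.rpow_add hu0, Real.rpow_one]
    rw [h1, h2, abs_neg, abs_of_pos hu0, Real.sign_of_neg (by linarith), hsplit]
    field_simp
    ring_nf
    have hd2 : (1 + u ^ ζ * 2 + (u ^ ζ) ^ 2) ≠ 0 := by positivity
    have e : (1 + u ^ ζ * 2 + (u ^ ζ) ^ 2)⁻¹ * (1 + u ^ ζ * 2 + (u ^ ζ) ^ 2) = 1 :=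
      inv_mul_cancel₀ hd2
    linear_combination -e
  -- eventual equality at infinity
  have heqT : S =ᶠ[atTop] fun ρ =>
      2 * ζ ^ 2 * (1 - rs / ρ) ^ (ζ - 2) * (rs / ρ / (1 - (1 - rs / ρ) ^ ζ)) ^ 2 := by
    filter_upwards [eventually_gt_atTop rs] with ρ hρ
    have hρ0 : 0 < ρ := hrs.trans hρ
    rw [hS ρ hρ0 (ne_of_gt hρ)]
    set t : ℝ := rs / ρ with htdef
    have ht0 : 0 < t := div_pos hrs hρ0
    have ht1 : t < 1 := (div_lt_one hρ0).2 hρ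
    have hx0 : (0:ℝ) < 1 - t := by linarith
    have hxζ : (1 - t) ^ ζ < 1 := Real.rpow_lt_one hx0.le (by linarith) hζ0
    have hden : (1 : ℝ) - (1 - t) ^ ζ ≠ 0 := by linarith
    have hsplit : (1 - t) ^ (ζ - 1) = (1 - t) ^ (ζ - 2) * (1 - t) := by
      rw [show ζ - 1 = (ζ - 2) + 1 by ring, Real.rpow_add hx0, Real.rpow_one]
    rw [abs_of_pos hx0, Real.sign_of_pos hx0, one_mul, hsplit]
    field_simp
  -- limit at infinity
  have hGT : Tendsto (fun t : ℝ =>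
      2 * ζ ^ 2 * (1 - t) ^ (ζ - 2) * (t / (1 - (1 - t) ^ ζ)) ^ 2)
      (𝓝[>] (0:ℝ)) (𝓝 2) := by
    have hder : HasDerivAt (fun t : ℝ => (1 - t) ^ ζ) (-ζ) 0 := by
      have h1 : HasDerivAt (fun y : ℝ => y ^ ζ) (ζ * (1:ℝ) ^ (ζ - 1))
          ((fun t : ℝ => 1 - t) 0) := by
        simpa using Real.hasDerivAt_rpow_const (x := (1:ℝ)) (p := ζ) (Or.inl one_ne_zero)
      have h2 : HasDerivAt (fun t : ℝ => 1 - t) (-1) 0 := by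
        simpa using (hasDerivAt_id (0:ℝ)).const_sub 1
      exact (h1.comp 0 h2).congr_deriv (by simp)
    have hslope := hasDerivAt_iff_tendsto_slope.mp hder
    have hq : Tendsto (fun t : ℝ => (1 - (1 - t) ^ ζ) / t) (𝓝[≠] (0:ℝ)) (𝓝 ζ) := by
      have h := hslope.neg
      rw [neg_neg] at h
      refine h.congr fun t => ?_
      simp only [slope_fun_def, vsub_eq_sub, sub_zero, Real.one_rpow, smul_eq_mul]
      ring
    have hinv : Tendsto (fun t : ℝ => t / (1 - (1 - t) ^ ζ)) (𝓝[≠] (0:ℝ)) (𝓝 ζ⁻¹) := by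
      have := hq.inv₀ hζ0.ne'
      simpa [inv_div] using this
    have hinv' : Tendsto (fun t : ℝ => t / (1 - (1 - t) ^ ζ)) (𝓝[>] (0:ℝ)) (𝓝 ζ⁻¹) :=
      hinv.mono_left (nhdsWithin_mono 0 (fun x hx => ne_of_gt hx))
    have hrp : Tendsto (fun t : ℝ => (1 - t) ^ (ζ - 2)) (𝓝[>] (0:ℝ)) (𝓝 1) := by
      have hc : ContinuousAt (fun t : ℝ => (1 - t) ^ (ζ - 2)) 0 :=
        (continuousAt_const.sub continuousAt_id).rpow_const (Or.inl (by norm_num))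
      have : Tendsto (fun t : ℝ => (1 - t) ^ (ζ - 2)) (𝓝[>] (0:ℝ))
          (𝓝 ((1 - (0:ℝ)) ^ (ζ - 2))) :=
        hc.tendsto.mono_left nhdsWithin_le_nhds
      simpa using this
    have : Tendsto (fun t : ℝ =>
        2 * ζ ^ 2 * (1 - t) ^ (ζ - 2) * (t / (1 - (1 - t) ^ ζ)) ^ 2)
        (𝓝[>] (0:ℝ)) (𝓝 (2 * ζ ^ 2 * 1 * (ζ⁻¹) ^ 2)) :=
      ((tendsto_const_nhds (x := (2 * ζ ^ 2 : ℝ))).mul hrp).mul (hinv'.pow 2)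
    have hval : 2 * ζ ^ 2 * 1 * (ζ⁻¹) ^ 2 = 2 := by
      field_simp
    rw [hval] at this
    exact this
  refine ⟨(hGT.comp htmap).congr' heqT.symm, ?_, ?_, ?_, ?_, ?_, ?_⟩
  · intro h
    exact ((hcP1 h).comp hxmap).congr' heqP.symm
  · intro h
    have := ((hcP2 h).comp hxmap).congr' heqP.symm
    rw [h] at this
    norm_num at this
    exact this
  · intro h
    exact ((hcP3 h).comp hxmap).congr' heqP.symm
  · intro h
    have := ((hcN1 h).comp humap)
    have hneg : Tendsto (fun ρ : ℝ =>
        -((2 * ζ ^ 2 * (1 + (rs / ρ - 1)) ^ 2 / (1 + (rs / ρ - 1) ^ ζ) ^ 2) *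
          (rs / ρ - 1) ^ (ζ - 2))) (𝓝[<] rs) atBot :=
      tendsto_neg_atTop_atBot.comp this
    exact hneg.congr' heqN.symm
  · intro h
    have := (((hcN2 h).comp humap).neg).congr' heqN.symm
    rw [h] at this
    norm_num at this
    exact this
  · intro h
    have := (((hcN3 h).comp humap).neg).congr' heqN.symm
    simpa using this
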